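/- Let f : (a,b) → ℝ be positive and twice differentiable satisfying f·f'' = (7/4)(f')² − (4/3)f² − f⁴ (the case c = −1), and suppose 9(f')²/(16f²) + 9f²/4 − 1 > 0 on (a,b). Define κ₂ := √(9(f')²/(16f²) + 9f²/4 − 1). Then 4κ₂'/κ₂ = 3f'/f. -/

import Mathlib

/-- If f > 0 satisfies f·f'' = (7/4)(f')² − (4/3)f² − f⁴ (case c = −1) with
W := 9(f')²/(16f²) + 9f²/4 − 1 > 0 and κ₂ := √W, then 4κ₂'/κ₂ = 3f'/f. -/
theorem stmt_19 (a b : ℝ) (f : ℝ → ℝ)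
    (hpos : ∀ u ∈ Set.Ioo a b, 0 < f u)
    (hdiff : ∀ u ∈ Set.Ioo a b, DifferentiableAt ℝ f u ∧ DifferentiableAt ℝ (deriv f) u)
    (hode : ∀ u ∈ Set.Ioo a b,
      f u * deriv (deriv f) u = (7 / 4) * (deriv f u) ^ 2 - (4 / 3) * (f u) ^ 2 - (f u) ^ 4)
    (hW : ∀ u ∈ Set.Ioo a b,
      0 < 9 * (deriv f u) ^ 2 / (16 * (f u) ^ 2) + 9 * (f u) ^ 2 / 4 - 1) :
    ∀ u ∈ Set.Ioo a b,
      4 * deriv (fun x => Real.sqrt (9 * (deriv f x) ^ 2 / (16 * (f x) ^ 2) +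
          9 * (f x) ^ 2 / 4 - 1)) u /
        Real.sqrt (9 * (deriv f u) ^ 2 / (16 * (f u) ^ 2) + 9 * (f u) ^ 2 / 4 - 1) =
      3 * deriv f u / f u := by
  intro u hu
  obtain ⟨hf, hf'⟩ := hdiff u hu
  have hfu : 0 < f u := hpos u hu
  have hWu := hW u hu
  have hfe : f u ≠ 0 := ne_of_gt hfu
  have hode' := hode u hu
  have h1 : HasDerivAt f (deriv f u) u := hf.hasDerivAt
  have h2 : HasDerivAt (deriv f) (deriv (deriv f) u) u := hf'.hasDerivAt
  have hden : (16 : ℝ) * (f u) ^ 2 ≠ 0 := by positivity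
  have hnum : HasDerivAt (fun x => 9 * (deriv f x) ^ 2)
      (9 * ((2 : ℕ) * (deriv f u) ^ 1 * deriv (deriv f) u)) u := (h2.pow 2).const_mul 9
  have hdenD : HasDerivAt (fun x => 16 * (f x) ^ 2)
      (16 * ((2 : ℕ) * (f u) ^ 1 * deriv f u)) u := (h1.pow 2).const_mul 16
  have hq : HasDerivAt (fun x => 9 * (deriv f x) ^ 2 / (16 * (f x) ^ 2))
      ((9 * ((2 : ℕ) * (deriv f u) ^ 1 * deriv (deriv f) u) * (16 * (f u) ^ 2)
        - 9 * (deriv f u) ^ 2 * (16 * ((2 : ℕ) * (f u) ^ 1 * deriv f u)))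
        / (16 * (f u) ^ 2) ^ 2) u := hnum.div hdenD hden
  have hsq : HasDerivAt (fun x => 9 * (f x) ^ 2 / 4)
      ((9 * ((2 : ℕ) * (f u) ^ 1 * deriv f u)) / 4) u := ((h1.pow 2).const_mul 9).div_const 4
  have hg : HasDerivAt (fun x => 9 * (deriv f x) ^ 2 / (16 * (f x) ^ 2) +
      9 * (f x) ^ 2 / 4 - 1)
      ((9 * ((2 : ℕ) * (deriv f u) ^ 1 * deriv (deriv f) u) * (16 * (f u) ^ 2)
        - 9 * (deriv f u) ^ 2 * (16 * ((2 : ℕ) * (f u) ^ 1 * deriv f u)))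
        / (16 * (f u) ^ 2) ^ 2
        + (9 * ((2 : ℕ) * (f u) ^ 1 * deriv f u)) / 4) u := (hq.add hsq).sub_const 1
  have hWne : 9 * (deriv f u) ^ 2 / (16 * (f u) ^ 2) + 9 * (f u) ^ 2 / 4 - 1 ≠ 0 :=
    ne_of_gt hWu
  have hsqrt := hg.sqrt hWne
  rw [hsqrt.deriv]
  set s := Real.sqrt (9 * (deriv f u) ^ 2 / (16 * (f u) ^ 2) + 9 * (f u) ^ 2 / 4 - 1) with hs
  have hspos : 0 < s := Real.sqrt_pos.mpr hWu
  have hsne : s ≠ 0 := ne_of_gt hspos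
  have hss : s * s = 9 * (deriv f u) ^ 2 / (16 * (f u) ^ 2) + 9 * (f u) ^ 2 / 4 - 1 :=
    Real.mul_self_sqrt (le_of_lt hWu)
  have hFF : f u * deriv (deriv f) u =
      (7 / 4) * (deriv f u) ^ 2 - (4 / 3) * (f u) ^ 2 - (f u) ^ 4 := hode'
  have hss' : 16 * f u ^ 2 * (s * s) = 9 * deriv f u ^ 2 + 36 * f u ^ 4 - 16 * f u ^ 2 := by
    rw [hss]; field_simp; ring
  field_simp
  linear_combination (-6 * deriv f u) * hss' + (72 * deriv f u) * hFF
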